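/- Let ε > 0 and Q > 1. Suppose (X,d,μ) is a Q-doubling metric measure space, u : X → ℝ is integrable on all balls, g ∈ L^Q(X,μ) is nonnegative and Borel measurable, and the pair (u,g) satisfies the Q-Poincaré inequality. Then there exists a set E ⊂ X with H^h(E) = 0, where h(t) = (log(1/t))^{−Q−ε}, such that for every x ∈ X \ E the limit lim_{r→0} (1/μ(B(x,r))) ∫_{B(x,r)} u dμ exists. -/

import Mathlib

open MeasureTheory Metric Set Filter Topology ENNReal

noncomputable section

/-- Every (open) ball has positive and finite measure. -/
def BallsPosFinite {X : Type*} [MetricSpace X] [MeasurableSpace X]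
    (μ : Measure X) : Prop :=
  ∀ (x : X) (r : ℝ), 0 < r → 0 < μ (ball x r) ∧ μ (ball x r) < ⊤

/-- `μ` is doubling with constant `Cμ`. -/
def DoublingWith {X : Type*} [MetricSpace X] [MeasurableSpace X]
    (μ : Measure X) (Cμ : ℝ≥0∞) : Prop :=
  ∀ (x : X) (r : ℝ), 0 < r → μ (ball x (2 * r)) ≤ Cμ * μ (ball x r)

/-- `μ` is a doubling measure. -/
def Doubling {X : Type*} [MetricSpace X] [MeasurableSpace X]
    (μ : Measure X) : Prop :=
  ∃ Cμ : ℝ≥0∞, 1 ≤ Cμ ∧ Cμ < ⊤ ∧ DoublingWith μ Cμ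

/-- Relative lower volume decay with exponent `Q` and constant `C`:
`(s/r)^Q ≤ C · μ(B(x,s))/μ(B(a,r))` whenever `x ∈ B(a,r)` and `0 < s ≤ r`. -/
def LowerVolume {X : Type*} [MetricSpace X] [MeasurableSpace X]
    (μ : Measure X) (Q C : ℝ) : Prop :=
  ∀ (a x : X) (r s : ℝ), x ∈ ball a r → 0 < s → s ≤ r →
    ENNReal.ofReal ((s / r) ^ Q) ≤ ENNReal.ofReal C * (μ (ball x s) / μ (ball a r))

/-- `(X,d,μ)` is `Q`-doubling: `μ` is doubling and the relative lower volume
decay `(s/r)^Q ≤ C μ(B(x,s))/μ(B(a,r))` holds for some constant `C ≥ 1`. -/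
def QDoubling {X : Type*} [MetricSpace X] [MeasurableSpace X]
    (μ : Measure X) (Q : ℝ) : Prop :=
  Doubling μ ∧ ∃ C : ℝ, 1 ≤ C ∧ LowerVolume μ Q C

/-- The pair `(u,g)` satisfies the `p`-Poincaré inequality with constants `C` and `lam`:
for every ball `B`, `⨍_B |u - u_B| dμ ≤ C diam(B) (⨍_{lam B} g^p dμ)^{1/p}`. -/
def PoincarePair {X : Type*} [MetricSpace X] [MeasurableSpace X]
    (μ : Measure X) (u g : X → ℝ) (p C lam : ℝ) : Prop :=
  ∀ (x : X) (r : ℝ), 0 < r →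
    ⨍ y in ball x r, |u y - ⨍ z in ball x r, u z ∂μ| ∂μ ≤
      C * diam (ball x r) * (⨍ y in ball x (lam * r), g y ^ p ∂μ) ^ (1 / p)

/-- A chain of balls `B_i = B(c i, s i)` associated with the point `x` and
radius `r`, with parameters `lam, M, m`. -/
def IsBallChain {X : Type*} [MetricSpace X] (lam M m : ℝ) (x : X) (r : ℝ)
    (c : ℕ → X) (s : ℕ → ℝ) : Prop :=
  (∀ i, 0 < s i) ∧
  -- (1) `B_0 ⊆ X \ B(x,r)`
  ball (c 0) (s 0) ⊆ (ball x r)ᶜ ∧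
  -- (2) `M⁻¹ diam(B_i) ≤ dist(x,B_i) ≤ M diam(B_i)`
  (∀ i, M⁻¹ * diam (ball (c i) (s i)) ≤ infDist x (ball (c i) (s i)) ∧
      infDist x (ball (c i) (s i)) ≤ M * diam (ball (c i) (s i))) ∧
  -- (3) `dist(x,B_i) ≤ M r 2^{-m i}`
  (∀ i : ℕ, infDist x (ball (c i) (s i)) ≤ M * r * (2 : ℝ) ^ (-(m * i))) ∧
  -- (4) there is a ball `D_i ⊆ B_i ∩ B_{i+1}` with `B_i ∪ B_{i+1} ⊆ M D_i`
  (∀ i : ℕ, ∃ (y : X) (t : ℝ), 0 < t ∧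
      ball y t ⊆ ball (c i) (s i) ∩ ball (c (i + 1)) (s (i + 1)) ∧
      ball (c i) (s i) ∪ ball (c (i + 1)) (s (i + 1)) ⊆ ball y (M * t)) ∧
  -- (5) no point of `X` belongs to more than `M` balls `lam B_i`
  (∀ y : X, {i : ℕ | y ∈ ball (c i) (lam * s i)}.Finite ∧
      ({i : ℕ | y ∈ ball (c i) (lam * s i)}.ncard : ℝ) ≤ M)

/-- `X` satisfies the chain condition: for every `lam ≥ 1` there are constants
`M ≥ 1`, `0 < m ≤ 1` such that for each `x ∈ X` and all `0 < r < diam(X)/8`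
there is a chain of balls associated with `x, r`. -/
def ChainCondition (X : Type*) [MetricSpace X] : Prop :=
  ∀ lam : ℝ, 1 ≤ lam → ∃ M m : ℝ, 1 ≤ M ∧ 0 < m ∧ m ≤ 1 ∧
    ∀ (x : X) (r : ℝ), 0 < r →
      ENNReal.ofReal r < EMetric.diam (Set.univ : Set X) / 8 →
      ∃ (c : ℕ → X) (s : ℕ → ℝ), IsBallChain lam M m x r c s

/-- The gauge function `h(t) = (log(1/t))^p` (as a function on `ℝ≥0∞`). -/
def hGauge (p : ℝ) : ℝ≥0∞ → ℝ≥0∞ :=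
  fun t => ENNReal.ofReal (Real.log (1 / t.toReal) ^ p)

/-- The generalized Hausdorff measure with gauge function `h(t) = (log(1/t))^p`. -/
def hausdorffH {X : Type*} [MetricSpace X] [MeasurableSpace X] [BorelSpace X]
    (p : ℝ) : Measure X :=
  Measure.mkMetric (hGauge p)

section Aux

variable {X : Type*} [MetricSpace X] [MeasurableSpace X] [BorelSpace X]

private lemma hGauge_zero' {p : ℝ} (hp : p ≠ 0) : hGauge p 0 = 0 := by
  simp [hGauge, Real.zero_rpow hp]

private lemma hGauge_mono' {p : ℝ} (hp : p < 0) {a b : ℝ≥0∞} (hab : a ≤ b)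
    (hb : b ≤ ENNReal.ofReal (Real.exp (-1))) : hGauge p a ≤ hGauge p b := by
  have hbtop : b ≠ ⊤ := ne_top_of_le_ne_top ofReal_ne_top hb
  have hatop : a ≠ ⊤ := ne_top_of_le_ne_top hbtop hab
  rcases eq_or_ne a 0 with rfl | ha0
  · rw [hGauge_zero' hp.ne]; exact zero_le
  have ha' : 0 < a.toReal := toReal_pos ha0 hatop
  have hab' : a.toReal ≤ b.toReal := toReal_mono hbtop hab
  have hb' : b.toReal ≤ Real.exp (-1) := by
    have := toReal_mono ofReal_ne_top hb
    rwa [toReal_ofReal (Real.exp_pos _).le] at this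
  have hb'0 : 0 < b.toReal := lt_of_lt_of_le ha' hab'
  have h1 : (0:ℝ) < Real.log (1 / b.toReal) := by
    rw [Real.log_div one_ne_zero hb'0.ne', Real.log_one]
    have : Real.log b.toReal ≤ -1 := by
      calc Real.log b.toReal ≤ Real.log (Real.exp (-1)) := Real.log_le_log hb'0 hb'
        _ = -1 := Real.log_exp _
    linarith
  have h2 : Real.log (1 / b.toReal) ≤ Real.log (1 / a.toReal) := by
    apply Real.log_le_log (by positivity)
    exact one_div_le_one_div_of_le ha' hab'
  exact ENNReal.ofReal_le_ofReal (Real.rpow_le_rpow_of_nonpos h1 h2 hp.le)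

private lemma lintegral_rpow_lt_top' (μ : Measure X) (g : X → ℝ) (Q : ℝ) (hQ : 1 < Q)
    (hg0 : ∀ x, 0 ≤ g x) (hgLQ : MemLp g (ENNReal.ofReal Q) μ) :
    ∫⁻ y, ENNReal.ofReal (g y ^ Q) ∂μ < ⊤ := by
  have hQ0 : (0:ℝ) < Q := by linarith
  have hp0 : ENNReal.ofReal Q ≠ 0 := by simp [hQ0]
  have h := hgLQ.2
  rw [eLpNorm_eq_lintegral_rpow_enorm_toReal hp0 ofReal_ne_top] at h
  rw [toReal_ofReal hQ0.le] at h
  have hlt : ∫⁻ y, ‖g y‖ₑ ^ Q ∂μ < ⊤ := by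
    by_contra hcon
    rw [not_lt, top_le_iff] at hcon
    rw [hcon, ENNReal.top_rpow_of_pos (by positivity)] at h
    exact (lt_irrefl _ h).elim
  have heq : ∀ y, ENNReal.ofReal (g y ^ Q) = ‖g y‖ₑ ^ Q := by
    intro y
    rw [Real.enorm_eq_ofReal (hg0 y), ← ENNReal.ofReal_rpow_of_nonneg (hg0 y) hQ0.le]
  simpa only [heq] using hlt

private lemma integral_rpow_eq' (μ : Measure X) (g : X → ℝ) (Q : ℝ) (hQ : 0 < Q)
    (hg0 : ∀ x, 0 ≤ g x) (hgm : Measurable g) (s : Set X) :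
    ∫ y in s, g y ^ Q ∂μ = (∫⁻ y in s, ENNReal.ofReal (g y ^ Q) ∂μ).toReal := by
  rw [integral_eq_lintegral_of_nonneg_ae]
  · exact Filter.Eventually.of_forall fun y => Real.rpow_nonneg (hg0 y) Q
  · exact ((Real.continuous_rpow_const hQ.le).measurable.comp hgm).aestronglyMeasurable

private lemma LowerVolume' (μ : Measure X) (Q CV lam t : ℝ) (hCV : 1 ≤ CV)
    (hLV : ∀ (a x : X) (r s : ℝ), x ∈ ball a r → 0 < s → s ≤ r →
      ENNReal.ofReal ((s / r) ^ Q) ≤ ENNReal.ofReal CV * (μ (ball x s) / μ (ball a r)))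
    (x : X) (hlam : 0 < lam) (ht : 0 < t) (ht1 : t ≤ 1)
    (h0pos : 0 < μ (ball x lam)) (h0fin : μ (ball x lam) < ⊤)
    (hsfin : μ (ball x (lam * t)) < ⊤) :
    t ^ Q / CV * (μ (ball x lam)).toReal ≤ (μ (ball x (lam * t))).toReal := by
  have hCV0 : (0:ℝ) < CV := lt_of_lt_of_le one_pos hCV
  have h := hLV x x lam (lam * t) (mem_ball_self hlam) (by positivity) (by nlinarith)
  have hst : lam * t / lam = t := by field_simp
  rw [hst] at h
  have hRtop : ENNReal.ofReal CV * (μ (ball x (lam * t)) / μ (ball x lam)) ≠ ⊤ := by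
    apply ENNReal.mul_ne_top ofReal_ne_top
    exact (ENNReal.div_lt_top hsfin.ne h0pos.ne').ne
  have h2 := toReal_mono hRtop h
  rw [toReal_ofReal (Real.rpow_nonneg ht.le Q), toReal_mul, toReal_ofReal hCV0.le,
    toReal_div] at h2
  have hm0 : 0 < (μ (ball x lam)).toReal := toReal_pos h0pos.ne' h0fin.ne
  rw [div_mul_eq_mul_div, div_le_iff₀ hCV0]
  have h3 := mul_le_mul_of_nonneg_right h2 hm0.le
  rw [mul_assoc, div_mul_cancel₀ _ hm0.ne'] at h3
  linarith

private lemma avg_sub_avg' (μ : Measure X) (u : X → ℝ) (x : X) (r' r : ℝ)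
    (h0 : 0 < r') (hrr : r' ≤ r)
    (hu : ∀ (z : X) (s : ℝ), 0 < s → IntegrableOn u (ball z s) μ)
    (hpos : ∀ s : ℝ, 0 < s → 0 < μ (ball x s) ∧ μ (ball x s) < ⊤) :
    |(⨍ y in ball x r', u y ∂μ) - ⨍ y in ball x r, u y ∂μ| ≤
      ((μ (ball x r)).toReal / (μ (ball x r')).toReal) *
        ⨍ y in ball x r, |u y - ⨍ z in ball x r, u z ∂μ| ∂μ := by
  have hr0 : 0 < r := lt_of_lt_of_le h0 hrr
  set c := ⨍ z in ball x r, u z ∂μ with hc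
  obtain ⟨hm'0, hm'top⟩ := hpos r' h0
  obtain ⟨hm0, hmtop⟩ := hpos r hr0
  set m' := (μ (ball x r')).toReal with hm'
  set m := (μ (ball x r)).toReal with hmdef
  have hm'pos : 0 < m' := toReal_pos hm'0.ne' hm'top.ne
  have hmpos : 0 < m := toReal_pos hm0.ne' hmtop.ne
  have hsub : ball x r' ⊆ ball x r := ball_subset_ball hrr
  have habs : IntegrableOn (fun y => |u y - c|) (ball x r) μ :=
    ((hu x r hr0).sub (integrableOn_const hmtop.ne)).abs
  have h1 : (⨍ y in ball x r', u y ∂μ) - c = ⨍ y in ball x r', (u y - c) ∂μ := by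
    rw [setAverage_eq, setAverage_eq, integral_sub (hu x r' h0)
      (integrableOn_const hm'top.ne), setIntegral_const, smul_eq_mul, smul_eq_mul,
      mul_sub, smul_eq_mul, measureReal_def, ← hm', ← mul_assoc, inv_mul_cancel₀ hm'pos.ne', one_mul]
  rw [h1]
  have h2 : |⨍ y in ball x r', (u y - c) ∂μ| ≤ m'⁻¹ * ∫ y in ball x r', |u y - c| ∂μ := by
    rw [setAverage_eq, smul_eq_mul, abs_mul, abs_inv, abs_of_nonneg measureReal_nonneg, measureReal_def, ← hm']
    gcongr
    simpa [Real.norm_eq_abs] using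
      norm_integral_le_integral_norm (μ := μ.restrict (ball x r')) (fun y => u y - c)
  have h3 : ∫ y in ball x r', |u y - c| ∂μ ≤ ∫ y in ball x r, |u y - c| ∂μ := by
    apply setIntegral_mono_set habs
    · exact Filter.Eventually.of_forall fun y => abs_nonneg _
    · exact HasSubset.Subset.eventuallyLE hsub
  calc |⨍ y in ball x r', (u y - c) ∂μ| ≤ m'⁻¹ * ∫ y in ball x r', |u y - c| ∂μ := h2
    _ ≤ m'⁻¹ * ∫ y in ball x r, |u y - c| ∂μ :=
        mul_le_mul_of_nonneg_left h3 (inv_nonneg.mpr hm'pos.le)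
    _ = (m / m') * ⨍ y in ball x r, |u y - c| ∂μ := by
        rw [setAverage_eq, smul_eq_mul, measureReal_def, ← hmdef]
        field_simp

end Aux


set_option maxHeartbeats 1000000 in
/-- Let `ε > 0`, `Q > 1`. If `(X,d,μ)` is a `Q`-doubling metric measure space,
`u` is integrable on balls, `g ∈ L^Q` is nonnegative Borel measurable and `(u,g)`
satisfies the `Q`-Poincaré inequality, then there is a set `E` with `H^h(E) = 0`,
`h(t) = log^{-Q-ε}(1/t)`, such that the limit of integral averages of `u` exists
at every point outside `E`. -/
theorem lebesgue_points_without_chain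
    (ε Q : ℝ) (hε : 0 < ε) (hQ : 1 < Q)
    {X : Type*} [MetricSpace X] [MeasurableSpace X] [BorelSpace X]
    (μ : Measure X) (hballs : BallsPosFinite μ)
    (hQdoub : QDoubling μ Q)
    (u g : X → ℝ)
    (hu : ∀ (x : X) (r : ℝ), 0 < r → IntegrableOn u (ball x r) μ)
    (hg0 : ∀ x, 0 ≤ g x) (hgm : Measurable g)
    (hgLQ : MemLp g (ENNReal.ofReal Q) μ)
    (C lam : ℝ) (hC : 0 < C) (hlam : 1 ≤ lam)
    (hPI : PoincarePair μ u g Q C lam) :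
    ∃ E : Set X, hausdorffH (-Q - ε) E = 0 ∧
      ∀ x ∉ E, ∃ L : ℝ, Tendsto (fun r : ℝ => ⨍ y in ball x r, u y ∂μ)
        (𝓝[>] 0) (𝓝 L) := by
  obtain ⟨⟨Cμ, hCμ1, hCμtop, hdoub⟩, ⟨CV, hCV1, hLV⟩⟩ := hQdoub
  have hQ0 : (0:ℝ) < Q := lt_trans one_pos hQ
  have hlam0 : (0:ℝ) < lam := lt_of_lt_of_le one_pos hlam
  have hCV0 : (0:ℝ) < CV := lt_of_lt_of_le one_pos hCV1
  -- the energy measure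
  set ν := μ.withDensity (fun y => ENNReal.ofReal (g y ^ Q)) with hνdef
  have hνball : ∀ (z : X) (s : ℝ),
      ν (ball z s) = ∫⁻ y in ball z s, ENNReal.ofReal (g y ^ Q) ∂μ :=
    fun z s => withDensity_apply _ measurableSet_ball
  have hνfin : ν univ ≠ ⊤ := by
    rw [withDensity_apply _ MeasurableSet.univ, Measure.restrict_univ]
    exact (lintegral_rpow_lt_top' μ g Q hQ hg0 hgLQ).ne
  have hνballfin : ∀ (z : X) (s : ℝ), ν (ball z s) ≠ ⊤ :=
    fun z s => ne_top_of_le_ne_top hνfin (measure_mono (subset_univ _))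
  -- dyadic radii
  set rr : ℕ → ℝ := fun i => (2:ℝ) ^ (-(i:ℝ)) with hrrdef
  have hrrpos : ∀ i, 0 < rr i := fun i => Real.rpow_pos_of_pos two_pos _
  have hrr1 : ∀ i, rr i ≤ 1 := fun i =>
    Real.rpow_le_one_of_one_le_of_nonpos one_le_two (neg_nonpos.mpr (Nat.cast_nonneg i))
  have hrrmono : ∀ {a b : ℕ}, a ≤ b → rr b ≤ rr a := fun {a b} h =>
    Real.rpow_le_rpow_of_exponent_le one_le_two (neg_le_neg (Nat.cast_le.mpr h))
  have hrreq : ∀ i : ℕ, rr i = (1/2 : ℝ)^i := by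
    intro i
    show (2:ℝ) ^ (-(i:ℝ)) = (1/2 : ℝ)^i
    rw [Real.rpow_neg (by norm_num : (0:ℝ) ≤ 2), Real.rpow_natCast, one_div, inv_pow]
  have hrrsucc : ∀ i : ℕ, rr i = 2 * rr (i+1) := by
    intro i
    rw [hrreq, hrreq, pow_succ]
    ring
  have hrrtendsto : Tendsto (fun i : ℕ => rr i) atTop (𝓝 0) := by
    simp only [hrreq]
    exact tendsto_pow_atTop_nhds_zero_of_lt_one (by norm_num) (by norm_num)
  -- thresholds
  set τ : ℕ → ℝ := fun i => ((i:ℝ)+1) ^ (-(Q + ε/2)) with hτdef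
  have hτpos : ∀ i, 0 < τ i := fun i => Real.rpow_pos_of_pos (by positivity) _
  have hτpow : ∀ i : ℕ, τ i ^ (1/Q) = ((i:ℝ)+1) ^ (-(1 + ε/(2*Q))) := by
    intro i
    rw [hτdef, ← Real.rpow_mul (by positivity)]
    congr 1
    field_simp
  -- bad sets
  set S : ℕ → Set X := fun i => {z : X | ENNReal.ofReal (τ i) ≤ ν (ball z (lam * rr i))}
    with hSdef
  set E : Set X := ⋂ N : ℕ, ⋃ i, ⋃ (_ : N ≤ i), S i with hEdef
  refine ⟨E, ?_, ?_⟩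
  · -- Part I : hausdorff measure of E vanishes
    classical
    have hp : (-Q - ε) < 0 := by linarith
    set F : ℕ → Set X := fun N => ⋃ i, ⋃ (_ : N ≤ i), S i with hFdef
    have hEF : ∀ N, E ⊆ F N := fun N => iInter_subset _ N
    -- choice of a bad scale for each point
    set idx : ℕ → X → ℕ := fun N a =>
      if h : ∃ i, N ≤ i ∧ a ∈ S i then h.choose else N with hidxdef
    have hidx_ge : ∀ N a, N ≤ idx N a := by
      intro N a
      rw [hidxdef]
      dsimp only
      split_ifs with h
      · exact h.choose_spec.1
      · exact le_rfl
    have hidx_mem : ∀ N a, a ∈ F N → a ∈ S (idx N a) := by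
      intro N a ha
      rw [hFdef] at ha
      simp only [mem_iUnion] at ha
      obtain ⟨i, hiN, hmem⟩ := ha
      rw [hidxdef]
      dsimp only
      split_ifs with h
      · exact h.choose_spec.2
      · exact absurd ⟨i, hiN, hmem⟩ h
    set rad : ℕ → X → ℝ := fun N a => lam * rr (idx N a) with hraddef
    have hrad_pos : ∀ N a, 0 < rad N a := fun N a => mul_pos hlam0 (hrrpos _)
    have hrad_le : ∀ N a, rad N a ≤ lam * rr N := fun N a =>
      mul_le_mul_of_nonneg_left (hrrmono (hidx_ge N a)) hlam0.le
    -- Vitali covering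
    have hVit : ∀ N : ℕ, ∃ w, w ⊆ F N ∧
        (w.PairwiseDisjoint fun a => closedBall a (rad N a)) ∧
        ∀ a ∈ F N, ∃ b ∈ w, closedBall a (rad N a) ⊆ closedBall b (4 * rad N b) :=
      fun N => Vitali.exists_disjoint_subfamily_covering_enlargement_closedBall
        (F N) (fun a => a) (rad N) (lam * rr N) (fun a _ => hrad_le N a) 4 (by norm_num)
    choose w hw1 hw2 hw3 using hVit
    have hballν : ∀ N : ℕ, ∀ b ∈ w N,
        ENNReal.ofReal (τ (idx N b)) ≤ ν (ball b (rad N b)) := by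
      intro N b hb
      exact hidx_mem N b (hw1 N hb)
    haveI : IsFiniteMeasure ν := ⟨lt_top_iff_ne_top.mpr hνfin⟩
    -- the Vitali family is countable
    have hcnt : ∀ N : ℕ, (w N).Countable := by
      intro N
      have hdisj : Pairwise (Function.onFun Disjoint fun b : (w N) => closedBall (b:X) (rad N (b:X))) := by
        intro b c hbc
        exact hw2 N b.2 c.2 (fun h => hbc (Subtype.ext h))
      have hcm := Measure.countable_meas_pos_of_disjoint_iUnion (μ := ν)
        (As := fun b : (w N) => closedBall (b:X) (rad N (b:X)))
        (fun b => measurableSet_closedBall) hdisj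
      have huniv : {b : (w N) | 0 < ν (closedBall (b:X) (rad N (b:X)))} = univ := by
        apply eq_univ_of_forall
        intro b
        calc (0:ℝ≥0∞) < ENNReal.ofReal (τ (idx N (b:X))) := ofReal_pos.mpr (hτpos _)
          _ ≤ ν (ball (b:X) (rad N (b:X))) := hballν N _ b.2
          _ ≤ ν (closedBall (b:X) (rad N (b:X))) := measure_mono ball_subset_closedBall
      rw [huniv] at hcm
      rw [← Set.countable_coe_iff]
      exact Set.countable_univ_iff.mp hcm
    haveI hcnt' : ∀ N : ℕ, Countable (w N) := fun N => (hcnt N).to_subtype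
    -- diameter bound for the enlarged balls
    have hdiam : ∀ N : ℕ, ∀ b : (w N),
        EMetric.diam (closedBall (b:X) (4 * rad N (b:X)))
          ≤ ENNReal.ofReal (8 * rad N (b:X)) := by
      intro N b
      apply EMetric.diam_le
      intro y hy z hz
      rw [edist_dist]
      apply ofReal_le_ofReal
      rw [mem_closedBall] at hy hz
      calc dist y z ≤ dist y (b:X) + dist z (b:X) := dist_triangle_right _ _ _
        _ ≤ 4 * rad N (b:X) + 4 * rad N (b:X) := add_le_add hy hz
        _ = 8 * rad N (b:X) := by ring
    -- apply the liminf bound for mkMetric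
    have hrtend : Tendsto (fun N : ℕ => ENNReal.ofReal (8 * lam * rr N)) atTop (𝓝 0) := by
      have h1 : Tendsto (fun N : ℕ => 8 * lam * rr N) atTop (𝓝 0) := by
        have := hrrtendsto.const_mul (8 * lam)
        simpa [mul_assoc] using this
      have h2 := (ENNReal.continuous_ofReal.tendsto 0).comp h1
      rw [ofReal_zero] at h2
      exact h2
    have hkey := Measure.mkMetric_le_liminf_tsum (X := X) E
      (l := atTop) (fun N : ℕ => ENNReal.ofReal (8 * lam * rr N)) hrtend
      (fun N (b : (w N)) => closedBall (b:X) (4 * rad N (b:X)))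
      (by
        apply Eventually.of_forall
        intro N b
        refine le_trans (hdiam N b) (ofReal_le_ofReal ?_)
        have := hrad_le N (b:X)
        calc 8 * rad N (b:X) ≤ 8 * (lam * rr N) := by linarith
          _ = 8 * lam * rr N := by ring)
      (by
        apply Eventually.of_forall
        intro N a haE
        have haF : a ∈ F N := hEF N haE
        obtain ⟨b, hbw, hsubs⟩ := hw3 N a haF
        exact mem_iUnion.mpr ⟨⟨b, hbw⟩,
          hsubs (mem_closedBall_self (hrad_pos N a).le)⟩)
      (hGauge (-Q - ε))
    -- eventual scale conditions
    have hc1 : ∀ᶠ i : ℕ in atTop, (i:ℝ)/4 ≤ (i:ℝ) * Real.log 2 - Real.log (8*lam) := by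
      have hlog2 : (0.6931471803:ℝ) < Real.log 2 := Real.log_two_gt_d9
      have ht1 : Tendsto (fun i : ℕ => (i:ℝ) * (Real.log 2 - 1/4)) atTop atTop :=
        Tendsto.atTop_mul_const (by linarith) tendsto_natCast_atTop_atTop
      filter_upwards [ht1.eventually_ge_atTop (Real.log (8*lam))] with i hi
      nlinarith [hi]
    have hc2 : ∀ᶠ i : ℕ in atTop, 8 * lam * rr i ≤ Real.exp (-1) := by
      have h8 : Tendsto (fun i : ℕ => 8 * lam * rr i) atTop (𝓝 0) := by
        have := hrrtendsto.const_mul (8 * lam)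
        simpa [mul_assoc] using this
      filter_upwards [h8.eventually_lt_const (Real.exp_pos (-1))] with i hi
      exact hi.le
    obtain ⟨N₁, hN₁⟩ := eventually_atTop.mp (hc1.and hc2)
    -- the per-ball gauge estimate
    have hterm : ∀ N : ℕ, max N₁ 1 ≤ N → ∀ b : (w N),
        hGauge (-Q - ε) (EMetric.diam (closedBall (b:X) (4 * rad N (b:X))))
          ≤ ENNReal.ofReal ((4:ℝ)^(Q+ε) * 2^(Q+ε/2) * (N:ℝ)^(-(ε/2)))
              * ν (ball (b:X) (rad N (b:X))) := by
      intro N hN b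
      set i := idx N (b:X) with hi
      have hiN : N ≤ i := hidx_ge N _
      have hiN₁ : N₁ ≤ i := le_trans (le_trans (le_max_left _ _) hN) hiN
      have hi1 : 1 ≤ i := le_trans (le_trans (le_max_right _ _) hN) hiN
      have hipos : (0:ℝ) < (i:ℝ) := by exact_mod_cast Nat.lt_of_lt_of_le Nat.zero_lt_one hi1
      have hN1le : 1 ≤ N := le_trans (le_max_right _ _) hN
      have hNpos : (0:ℝ) < (N:ℝ) := by exact_mod_cast Nat.lt_of_lt_of_le Nat.zero_lt_one hN1le
      obtain ⟨hc1i, hc2i⟩ := hN₁ i hiN₁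
      have hradeq : rad N (b:X) = lam * rr i := rfl
      have hd0 : (0:ℝ) < 8 * lam * rr i := by positivity
      -- gauge monotonicity
      have hg1 : hGauge (-Q - ε) (EMetric.diam (closedBall (b:X) (4 * rad N (b:X))))
          ≤ hGauge (-Q - ε) (ENNReal.ofReal (8 * lam * rr i)) := by
        apply hGauge_mono' hp
        · refine le_trans (hdiam N b) (ofReal_le_ofReal ?_)
          rw [hradeq]; ring_nf; exact le_rfl
        · exact ofReal_le_ofReal hc2i
      have hg2 : hGauge (-Q - ε) (ENNReal.ofReal (8 * lam * rr i))
          = ENNReal.ofReal (Real.log (1/(8 * lam * rr i)) ^ (-Q - ε)) := by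
        simp only [hGauge, toReal_ofReal hd0.le]
      have hlogval : Real.log (1/(8 * lam * rr i)) = (i:ℝ) * Real.log 2 - Real.log (8*lam) := by
        rw [one_div, Real.log_inv, Real.log_mul (by positivity : (8*lam:ℝ) ≠ 0) (hrrpos i).ne']
        rw [show rr i = (2:ℝ)^(-(i:ℝ)) from rfl, Real.log_rpow two_pos]
        ring
      have hlog_ge : (i:ℝ)/4 ≤ Real.log (1/(8 * lam * rr i)) := by rw [hlogval]; exact hc1i
      have hg3 : Real.log (1/(8 * lam * rr i)) ^ (-Q - ε) ≤ ((i:ℝ)/4) ^ (-Q - ε) :=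
        Real.rpow_le_rpow_of_nonpos (by positivity) hlog_ge (by linarith)
      have hg4 : ((i:ℝ)/4) ^ (-Q - ε) = (4:ℝ)^(Q+ε) * (i:ℝ)^(-Q - ε) := by
        rw [Real.div_rpow hipos.le (by norm_num : (0:ℝ) ≤ 4),
          show -Q - ε = -(Q+ε) by ring, Real.rpow_neg (by norm_num : (0:ℝ) ≤ 4),
          div_eq_mul_inv, inv_inv, mul_comm]
      have hg5 : (i:ℝ)^(-Q - ε) ≤ (N:ℝ)^(-(ε/2)) * ((2:ℝ)^(Q+ε/2) * τ i) := by
        have hsplit : (i:ℝ)^(-Q - ε) = (i:ℝ)^(-(ε/2)) * (i:ℝ)^(-(Q+ε/2)) := by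
          rw [← Real.rpow_add hipos]
          congr 1
          ring
        have h5a : (i:ℝ)^(-(ε/2)) ≤ (N:ℝ)^(-(ε/2)) :=
          Real.rpow_le_rpow_of_nonpos hNpos (Nat.cast_le.mpr hiN) (by linarith)
        have h5b : (i:ℝ)^(-(Q+ε/2)) ≤ (2:ℝ)^(Q+ε/2) * τ i := by
          have h2i : ((i:ℝ)+1) ≤ 2*(i:ℝ) := by
            have : (1:ℝ) ≤ (i:ℝ) := by exact_mod_cast hi1
            linarith
          have hmono := Real.rpow_le_rpow_of_nonpos (by positivity : (0:ℝ) < (i:ℝ)+1)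
            h2i (by linarith : -(Q+ε/2) ≤ 0)
          have hmul : ((2:ℝ)*(i:ℝ))^(-(Q+ε/2))
              = (2:ℝ)^(-(Q+ε/2)) * (i:ℝ)^(-(Q+ε/2)) :=
            Real.mul_rpow (by norm_num) hipos.le
          have hτi : τ i = ((i:ℝ)+1)^(-(Q+ε/2)) := rfl
          have h2e : (2:ℝ)^(Q+ε/2) * (2:ℝ)^(-(Q+ε/2)) = 1 := by
            rw [← Real.rpow_add two_pos, add_neg_cancel, Real.rpow_zero]
          calc (i:ℝ)^(-(Q+ε/2))
              = ((2:ℝ)^(Q+ε/2) * (2:ℝ)^(-(Q+ε/2))) * (i:ℝ)^(-(Q+ε/2)) := by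
                rw [h2e, one_mul]
            _ = (2:ℝ)^(Q+ε/2) * ((2:ℝ)*(i:ℝ))^(-(Q+ε/2)) := by
                rw [hmul]; ring
            _ ≤ (2:ℝ)^(Q+ε/2) * τ i := by
                rw [hτi]
                exact mul_le_mul_of_nonneg_left hmono (Real.rpow_nonneg (by norm_num) _)
        calc (i:ℝ)^(-Q - ε) = (i:ℝ)^(-(ε/2)) * (i:ℝ)^(-(Q+ε/2)) := hsplit
          _ ≤ (N:ℝ)^(-(ε/2)) * ((2:ℝ)^(Q+ε/2) * τ i) :=
              mul_le_mul h5a h5b (Real.rpow_nonneg hipos.le _) (Real.rpow_nonneg hNpos.le _)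
      calc hGauge (-Q - ε) (EMetric.diam (closedBall (b:X) (4 * rad N (b:X))))
          ≤ ENNReal.ofReal (Real.log (1/(8 * lam * rr i)) ^ (-Q - ε)) := by
            rw [← hg2]; exact hg1
        _ ≤ ENNReal.ofReal ((4:ℝ)^(Q+ε) * ((N:ℝ)^(-(ε/2)) * ((2:ℝ)^(Q+ε/2) * τ i))) := by
            apply ofReal_le_ofReal
            calc Real.log (1/(8 * lam * rr i)) ^ (-Q - ε) ≤ ((i:ℝ)/4) ^ (-Q - ε) := hg3
              _ = (4:ℝ)^(Q+ε) * (i:ℝ)^(-Q - ε) := hg4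
              _ ≤ (4:ℝ)^(Q+ε) * ((N:ℝ)^(-(ε/2)) * ((2:ℝ)^(Q+ε/2) * τ i)) :=
                  mul_le_mul_of_nonneg_left hg5 (Real.rpow_nonneg (by norm_num) _)
        _ = ENNReal.ofReal ((4:ℝ)^(Q+ε) * 2^(Q+ε/2) * (N:ℝ)^(-(ε/2))) * ENNReal.ofReal (τ i) := by
            rw [← ofReal_mul (by positivity)]
            congr 1
            ring
        _ ≤ ENNReal.ofReal ((4:ℝ)^(Q+ε) * 2^(Q+ε/2) * (N:ℝ)^(-(ε/2)))
              * ν (ball (b:X) (rad N (b:X))) :=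
            mul_le_mul_right (hballν N _ b.2) _
    -- bounding the total sums
    have hνsum : ∀ N : ℕ, (∑' b : (w N), ν (ball (b:X) (rad N (b:X)))) ≤ ν univ := by
      intro N
      have hdisjb : Pairwise (Function.onFun Disjoint fun b : (w N) => ball (b:X) (rad N (b:X))) := by
        intro b c hbc
        exact (hw2 N b.2 c.2 (fun h => hbc (Subtype.ext h))).mono
          ball_subset_closedBall ball_subset_closedBall
      calc (∑' b : (w N), ν (ball (b:X) (rad N (b:X))))
          ≤ ν (⋃ b : (w N), ball (b:X) (rad N (b:X))) :=
            tsum_meas_le_meas_iUnion_of_disjoint ν (fun b => measurableSet_ball) hdisjb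
        _ ≤ ν univ := measure_mono (subset_univ _)
    have hbound : ∀ᶠ N : ℕ in atTop,
        (∑' b : (w N), hGauge (-Q - ε)
            (EMetric.diam (closedBall (b:X) (4 * rad N (b:X)))))
          ≤ ENNReal.ofReal ((4:ℝ)^(Q+ε) * 2^(Q+ε/2) * (N:ℝ)^(-(ε/2))) * ν univ := by
      rw [eventually_atTop]
      refine ⟨max N₁ 1, fun N hN => ?_⟩
      calc (∑' b : (w N), hGauge (-Q - ε)
            (EMetric.diam (closedBall (b:X) (4 * rad N (b:X)))))
          ≤ ∑' b : (w N), ENNReal.ofReal ((4:ℝ)^(Q+ε) * 2^(Q+ε/2) * (N:ℝ)^(-(ε/2)))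
              * ν (ball (b:X) (rad N (b:X))) :=
            ENNReal.tsum_le_tsum (fun b => hterm N hN b)
        _ = ENNReal.ofReal ((4:ℝ)^(Q+ε) * 2^(Q+ε/2) * (N:ℝ)^(-(ε/2)))
              * ∑' b : (w N), ν (ball (b:X) (rad N (b:X))) := ENNReal.tsum_mul_left
        _ ≤ ENNReal.ofReal ((4:ℝ)^(Q+ε) * 2^(Q+ε/2) * (N:ℝ)^(-(ε/2))) * ν univ :=
            mul_le_mul_right (hνsum N) _
    -- final limit computation
    have htend0 : Tendsto (fun N : ℕ =>
        ENNReal.ofReal ((4:ℝ)^(Q+ε) * 2^(Q+ε/2) * (N:ℝ)^(-(ε/2))) * ν univ) atTop (𝓝 0) := by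
      have hr1 : Tendsto (fun N : ℕ => (4:ℝ)^(Q+ε) * 2^(Q+ε/2) * (N:ℝ)^(-(ε/2))) atTop (𝓝 0) := by
        have h1 := (tendsto_rpow_neg_atTop (by positivity : (0:ℝ) < ε/2)).comp
          (tendsto_natCast_atTop_atTop (R := ℝ))
        have h2 := h1.const_mul ((4:ℝ)^(Q+ε) * 2^(Q+ε/2))
        simpa using h2
      have h3 := (ENNReal.continuous_ofReal.tendsto 0).comp hr1
      rw [show ENNReal.ofReal 0 = 0 from ofReal_zero] at h3
      have h4 := ENNReal.Tendsto.mul_const h3 (Or.inr hνfin)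
      simpa [Function.comp] using h4
    refine le_antisymm ?_ zero_le
    calc hausdorffH (-Q - ε) E
        ≤ liminf (fun N : ℕ => ∑' b : (w N), hGauge (-Q - ε)
            (EMetric.diam (closedBall (b:X) (4 * rad N (b:X))))) atTop := hkey
      _ ≤ liminf (fun N : ℕ =>
            ENNReal.ofReal ((4:ℝ)^(Q+ε) * 2^(Q+ε/2) * (N:ℝ)^(-(ε/2))) * ν univ) atTop :=
          liminf_le_liminf hbound
      _ = 0 := htend0.liminf_eq

  · -- Part II : limits exist off E
    intro x hxE
    have hx' : ∃ N : ℕ, ∀ i, N ≤ i → ν (ball x (lam * rr i)) < ENNReal.ofReal (τ i) := by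
      by_contra hcon
      push_neg at hcon
      apply hxE
      rw [hEdef, mem_iInter]
      intro N
      obtain ⟨i, hiN, hle⟩ := hcon N
      rw [mem_iUnion]
      exact ⟨i, by rw [mem_iUnion]; exact ⟨hiN, hle⟩⟩
    obtain ⟨N₀, hN₀⟩ := hx'
    obtain ⟨hb0pos, hb0fin⟩ := hballs x lam hlam0
    set m₀ : ℝ := (μ (ball x lam)).toReal with hm₀def
    have hm₀pos : 0 < m₀ := toReal_pos hb0pos.ne' hb0fin.ne
    set K : ℝ := Cμ.toReal * (C * 2 * (CV / m₀) ^ (1/Q)) with hKdef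
    have hCμR1 : 1 ≤ Cμ.toReal := by
      rw [← ENNReal.toReal_one]
      exact toReal_mono hCμtop.ne hCμ1
    have hK0 : 0 ≤ K := by
      rw [hKdef]
      have h1 : (0:ℝ) ≤ (CV / m₀) ^ (1/Q) := Real.rpow_nonneg (by positivity) _
      exact mul_nonneg toReal_nonneg (mul_nonneg (by positivity) h1)
    set v : ℕ → ℝ := fun i => ⨍ y in ball x (rr i), u y ∂μ with hvdef
    -- the main quantitative estimate
    have hKey : ∀ i : ℕ, N₀ ≤ i → ∀ r' : ℝ, 0 < r' → rr (i+1) ≤ r' → r' ≤ rr i →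
        |(⨍ y in ball x r', u y ∂μ) - v i| ≤ K * τ i ^ (1/Q) := by
      intro i hiN r' hr'0 hr'lo hr'hi
      have hri := hrrpos i
      have hble := hballs x r' hr'0
      have hbig := hballs x (rr i) hri
      have hbL := hballs x (lam * rr i) (by positivity)
      -- step A
      have hstepA := avg_sub_avg' μ u x r' (rr i) hr'0 hr'hi hu (fun s hs => hballs x s hs)
      -- Poincaré inequality
      have hPIi := hPI x (rr i) hri
      -- identification of the average of gᵠ
      have havg : (⨍ y in ball x (lam * rr i), g y ^ Q ∂μ)
          = (ν (ball x (lam * rr i))).toReal / (μ (ball x (lam * rr i))).toReal := by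
        rw [setAverage_eq, smul_eq_mul, integral_rpow_eq' μ g Q hQ0 hg0 hgm, ← hνball,
          inv_mul_eq_div, measureReal_def]
      have havgnn : 0 ≤ ⨍ y in ball x (lam * rr i), g y ^ Q ∂μ := by
        rw [havg]; positivity
      -- numerator bound
      have hnum : (ν (ball x (lam * rr i))).toReal ≤ τ i := by
        have h2 := toReal_mono ofReal_ne_top (hN₀ i hiN).le
        rwa [toReal_ofReal (hτpos i).le] at h2
      -- denominator bound
      have hden := LowerVolume' μ Q CV lam (rr i) hCV1 hLV x hlam0 hri (hrr1 i)
        hb0pos hb0fin hbL.2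
      have hdpos : 0 < rr i ^ Q / CV * m₀ := by positivity
      have hmLpos : 0 < (μ (ball x (lam * rr i))).toReal := toReal_pos hbL.1.ne' hbL.2.ne
      have havg_le : (⨍ y in ball x (lam * rr i), g y ^ Q ∂μ)
          ≤ τ i * CV / (rr i ^ Q * m₀) := by
        rw [havg]
        calc (ν (ball x (lam * rr i))).toReal / (μ (ball x (lam * rr i))).toReal
            ≤ τ i / (rr i ^ Q / CV * m₀) :=
              div_le_div₀ (hτpos i).le hnum hdpos hden
          _ = τ i * CV / (rr i ^ Q * m₀) := by
              field_simp
      -- rpow bound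
      have hrpow : (⨍ y in ball x (lam * rr i), g y ^ Q ∂μ) ^ (1/Q)
          ≤ τ i ^ (1/Q) * (CV / m₀) ^ (1/Q) / rr i := by
        have h1 : (⨍ y in ball x (lam * rr i), g y ^ Q ∂μ) ^ (1/Q)
            ≤ (τ i * CV / (rr i ^ Q * m₀)) ^ (1/Q) :=
          Real.rpow_le_rpow havgnn havg_le (by positivity)
        have heq1 : τ i * CV / (rr i ^ Q * m₀) = τ i * (CV / m₀) / (rr i ^ Q) := by
          field_simp
        have heq2 : (τ i * (CV / m₀) / (rr i ^ Q)) ^ (1/Q)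
            = τ i ^ (1/Q) * (CV / m₀) ^ (1/Q) / rr i := by
          rw [Real.div_rpow (by positivity) (by positivity),
            Real.mul_rpow (hτpos i).le (by positivity), ← Real.rpow_mul hri.le,
            mul_one_div_cancel hQ0.ne', Real.rpow_one]
        rw [← heq2, ← heq1]
        exact h1
      -- doubling ratio bound
      have hratio : (μ (ball x (rr i))).toReal / (μ (ball x r')).toReal ≤ Cμ.toReal := by
        have h1 : μ (ball x (rr i)) ≤ Cμ * μ (ball x r') := by
          calc μ (ball x (rr i)) = μ (ball x (2 * rr (i+1))) := by rw [← hrrsucc]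
            _ ≤ Cμ * μ (ball x (rr (i+1))) := hdoub x (rr (i+1)) (hrrpos _)
            _ ≤ Cμ * μ (ball x r') := by
                exact mul_le_mul_right (measure_mono (ball_subset_ball hr'lo)) Cμ
        have h2 := toReal_mono (ENNReal.mul_ne_top hCμtop.ne hble.2.ne) h1
        rw [toReal_mul] at h2
        rw [div_le_iff₀ (toReal_pos hble.1.ne' hble.2.ne)]
        exact h2
      have habsnn : 0 ≤ ⨍ y in ball x (rr i), |u y - v i| ∂μ := by
        rw [setAverage_eq, smul_eq_mul]
        exact mul_nonneg (inv_nonneg.mpr toReal_nonneg)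
          (integral_nonneg fun y => abs_nonneg _)
      have hdiam : diam (ball x (rr i)) ≤ 2 * rr i := diam_ball hri.le
      have hrpownn : (0:ℝ) ≤ (⨍ y in ball x (lam * rr i), g y ^ Q ∂μ) ^ (1/Q) :=
        Real.rpow_nonneg havgnn _
      calc |(⨍ y in ball x r', u y ∂μ) - v i|
          ≤ ((μ (ball x (rr i))).toReal / (μ (ball x r')).toReal) *
              ⨍ y in ball x (rr i), |u y - v i| ∂μ := hstepA
        _ ≤ Cμ.toReal * ⨍ y in ball x (rr i), |u y - v i| ∂μ :=
            mul_le_mul_of_nonneg_right hratio habsnn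
        _ ≤ Cμ.toReal * (C * diam (ball x (rr i)) *
              (⨍ y in ball x (lam * rr i), g y ^ Q ∂μ) ^ (1/Q)) :=
            mul_le_mul_of_nonneg_left hPIi (by linarith)
        _ ≤ Cμ.toReal * (C * (2 * rr i) *
              (τ i ^ (1/Q) * (CV / m₀) ^ (1/Q) / rr i)) := by
            apply mul_le_mul_of_nonneg_left _ (by linarith : (0:ℝ) ≤ Cμ.toReal)
            apply mul_le_mul (by nlinarith) hrpow hrpownn (by positivity)
        _ = K * τ i ^ (1/Q) := by
            rw [hKdef]
            field_simp
    -- Cauchy sequence of dyadic averages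
    have hdist : ∀ n : ℕ, dist (v (n + N₀)) (v (n + 1 + N₀))
        ≤ K * τ (n + N₀) ^ (1/Q) := by
      intro n
      have hidx : n + 1 + N₀ = n + N₀ + 1 := by omega
      rw [hidx, dist_comm, Real.dist_eq]
      exact hKey (n + N₀) (by omega) (rr (n + N₀ + 1)) (hrrpos _) le_rfl
        (hrrmono (by omega))
    have hsummable : Summable (fun n : ℕ => K * τ (n + N₀) ^ (1/Q)) := by
      apply Summable.mul_left
      have hbase : Summable (fun k : ℕ => ((k:ℝ)+1) ^ (-(1 + ε/(2*Q)))) := by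
        have h1 : Summable (fun k : ℕ => ((k:ℝ)) ^ (-(1 + ε/(2*Q)))) := by
          apply Real.summable_nat_rpow.mpr
          have : 0 < ε/(2*Q) := by positivity
          linarith
        have := (summable_nat_add_iff 1).mpr h1
        apply this.congr
        intro k
        push_cast
        norm_num
      simp only [hτpow]
      exact (summable_nat_add_iff
        (f := fun k : ℕ => ((k:ℝ)+1) ^ (-(1 + ε/(2*Q)))) N₀).mpr hbase
    have hcauchy : CauchySeq (fun n : ℕ => v (n + N₀)) :=
      cauchySeq_of_dist_le_of_summable _ hdist hsummable
    obtain ⟨L, hL⟩ := cauchySeq_tendsto_of_complete hcauchy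
    have hvL : Tendsto v atTop (𝓝 L) := (tendsto_add_atTop_iff_nat N₀).mp hL
    refine ⟨L, ?_⟩
    have hKτ0 : Tendsto (fun i : ℕ => K * τ i ^ (1/Q)) atTop (𝓝 0) := by
      simp only [hτpow]
      have h1 : Tendsto (fun z : ℝ => z ^ (-(1 + ε/(2*Q)))) atTop (𝓝 0) :=
        tendsto_rpow_neg_atTop (by positivity)
      have h2 : Tendsto (fun i : ℕ => (i:ℝ)+1) atTop atTop :=
        tendsto_atTop_add_const_right _ 1 tendsto_natCast_atTop_atTop
      have := (h1.comp h2).const_mul K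
      simpa using this
    rw [Metric.tendsto_nhdsWithin_nhds]
    intro η hη
    obtain ⟨I₁, hI₁⟩ := Metric.tendsto_atTop.mp hvL (η/2) (by positivity)
    obtain ⟨I₂, hI₂⟩ := Metric.tendsto_atTop.mp hKτ0 (η/2) (by positivity)
    set I : ℕ := max (max I₁ I₂) N₀ with hIdef
    refine ⟨rr (I+1), hrrpos _, ?_⟩
    intro r hrIoi hrd
    have hrpos : 0 < r := hrIoi
    have hrlt : r < rr (I+1) := by
      rw [Real.dist_eq, sub_zero, abs_of_pos hrpos] at hrd
      exact hrd
    have hex : ∃ j : ℕ, rr (j+1) < r := by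
      have h0 : Tendsto (fun j : ℕ => rr (j+1)) atTop (𝓝 0) :=
        hrrtendsto.comp (tendsto_add_atTop_nat 1)
      exact (h0.eventually (gt_mem_nhds hrpos)).exists
    set i := Nat.find hex with hidef
    have hi1 : rr (i+1) < r := Nat.find_spec hex
    have hi2 : r ≤ rr i := by
      rcases Nat.eq_zero_or_pos i with h0 | hposi
      · rw [h0]
        have h00 : rr 0 = 1 := by rw [hrreq]; norm_num
        rw [h00]
        have := hrr1 (I+1)
        linarith
      · have hmin := Nat.find_min hex (m := i - 1) (by omega)
        push_neg at hmin
        have hik : i - 1 + 1 = i := Nat.succ_pred_eq_of_pos hposi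
        rwa [hik] at hmin
    have hiI : I < i := by
      by_contra hcon
      push_neg at hcon
      have : rr (I+1) ≤ rr (i+1) := hrrmono (by omega)
      linarith
    have hd1 : dist (⨍ y in ball x r, u y ∂μ) (v i) ≤ K * τ i ^ (1/Q) := by
      rw [Real.dist_eq]
      exact hKey i (by omega) r hrpos hi1.le hi2
    have hd2 : K * τ i ^ (1/Q) < η/2 := by
      have h := hI₂ i (by omega)
      rw [Real.dist_eq, sub_zero] at h
      exact lt_of_le_of_lt (le_abs_self _) h
    have hd3 : dist (v i) L < η/2 := hI₁ i (by omega)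
    calc dist (⨍ y in ball x r, u y ∂μ) L
        ≤ dist (⨍ y in ball x r, u y ∂μ) (v i) + dist (v i) L := dist_triangle _ _ _
      _ < η := by linarith
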